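/- arXiv:1702.03608 — 2 statements merged into one kernel-verified Lean document; each statement's English description precedes it below -/
import Mathlib

section
/- (Differential Hensel's Lemma, m = 1 case) Let f ∈ O{x, δ₁} where O = ℂ[[t]] and δ₁ = t d/dt, with f̄ ≠ 0 mod t. Suppose f̄ = g₀ h₀ with g₀, h₀ ∈ ℂ[x] such that gcd(g₀(x + n), h₀(x)) = 1 for every positive integer n. Then there exist g, h ∈ O{x, δ₁} with f = g h, deg g = deg g₀, ḡ = g₀, and h̄ = h₀. -/
set_option maxHeartbeats 1000000
set_option synthInstance.maxHeartbeats 1000000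

noncomputable section

/-- `K = ℂ((t))`, the field of formal Laurent series. -/
abbrev K : Type := LaurentSeries ℂ

/-- The derivation `d = t * d/dt` on `K`, acting on coefficients by `cₙ ↦ n * cₙ`. -/
def dd : K →ₗ[ℂ] K where
  toFun f :=
    { coeff := fun n => (n : ℂ) * f.coeff n
      isPWO_support' := f.isPWO_support'.mono (fun n hn => by
        simp only [Function.mem_support, ne_eq] at hn ⊢
        exact fun h => hn (by rw [h, mul_zero])) }
  map_add' f g := by
    ext n
    simp [mul_add]
  map_smul' c f := by
    ext n
    simp [HahnSeries.coeff_smul]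
    ring

/-- Multiplication by `a ∈ K` as a `ℂ`-linear endomorphism of `K`. -/
def mulOp (a : K) : Module.End ℂ K where
  toFun f := a * f
  map_add' := mul_add a
  map_smul' c f := by
    simp only [RingHom.id_apply]
    rw [← HahnSeries.single_zero_mul_eq_smul, ← HahnSeries.single_zero_mul_eq_smul]
    ring

/-- `d = t d/dt` as an endomorphism. -/
def ddE : Module.End ℂ K := dd

/-- The element `t ∈ K`. -/
def tK : K := HahnSeries.single (1 : ℤ) (1 : ℂ)

/-- The element `t^i ∈ K` for `i : ℤ`. -/
def tpow (i : ℤ) : K := HahnSeries.single i (1 : ℂ)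

/-- The operator corresponding to the variable `x` of the twisted polynomial ring
`K{x, δ_m}`, i.e. the derivation `δ_m = t^m d/dt = t^(m-1) ⬝ (t d/dt)`. -/
def Xop (m : ℕ) : Module.End ℂ K := mulOp (tK ^ (m - 1)) * ddE

/-- The inclusion `O = ℂ[[t]] → K`. -/
def ofPS : PowerSeries ℂ →+* K := HahnSeries.ofPowerSeries ℤ ℂ

/-- The operator attached to a twisted polynomial `Σ_{i ≤ n} a_i x^i` with
coefficients `a_i ∈ O = ℂ[[t]]`, in `K{x, δ_m}`. -/
def opO (m n : ℕ) (a : ℕ → PowerSeries ℂ) : Module.End ℂ K :=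
  ∑ i ∈ Finset.range (n + 1), mulOp (ofPS (a i)) * (Xop m) ^ i

/-- Reduction mod `t` of a twisted polynomial with coefficients in `O`. -/
def red (n : ℕ) (a : ℕ → PowerSeries ℂ) : Polynomial ℂ :=
  ∑ i ∈ Finset.range (n + 1), Polynomial.C (PowerSeries.constantCoeff (R := ℂ) (a i)) * Polynomial.X ^ i

/-- The embedding `K → K`, `t ↦ t^q`, realising `K` as the subfield `ℂ((s^q)) ⊆ ℂ((s))`. -/
def embHom (q : ℕ) (hq : 0 < q) : K →+* K :=
  HahnSeries.embDomainRingHom (AddMonoidHom.mk' (fun n => (q : ℤ) * n) (by intro a b; ring))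
    (fun a b h => by
      simpa using mul_left_cancel₀ (by exact_mod_cast hq.ne' : (q : ℤ) ≠ 0) h)
    (fun a b => by
      constructor
      · intro h; exact le_of_mul_le_mul_left h (by exact_mod_cast hq)
      · intro h; exact mul_le_mul_of_nonneg_left h (by positivity))


section Aux

open Polynomial Finset

namespace DH

lemma dd_coeff (f : K) (m : ℤ) : (dd f).coeff m = (m : ℂ) * f.coeff m := rfl

lemma mulOp_apply (x f : K) : mulOp x f = x * f := rfl

lemma ddE_apply (f : K) : ddE f = dd f := rfl

lemma mulOp_mul (x y : K) : mulOp (x * y) = mulOp x * mulOp y := by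
  ext f; simp [mulOp_apply, Module.End.mul_apply, mul_assoc]

lemma mulOp_one : mulOp (1 : K) = 1 := by
  ext f; simp [mulOp_apply]

lemma mulOp_zero : mulOp (0 : K) = 0 := by
  ext f; simp [mulOp_apply]

lemma mulOp_add (x y : K) : mulOp (x + y) = mulOp x + mulOp y := by
  ext f; simp [mulOp_apply, add_mul]

lemma mulOp_sub (x y : K) : mulOp (x - y) = mulOp x - mulOp y := by
  ext f; simp [mulOp_apply, sub_mul]

lemma mulOp_sum {s : Finset ℕ} (x : ℕ → K) : mulOp (∑ k ∈ s, x k) = ∑ k ∈ s, mulOp (x k) := by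
  ext f; simp [mulOp_apply, Finset.sum_mul]

lemma Xop_one : Xop 1 = ddE := by
  unfold Xop
  norm_num [mulOp_one]

lemma dd_mul (x y : K) : dd (x * y) = dd x * y + x * dd y := by
  ext m
  have hx : (dd x).support ⊆ x.support := by
    intro i hi
    rw [HahnSeries.mem_support] at hi ⊢
    intro h
    exact hi (by rw [dd_coeff, h, mul_zero])
  have hy : (dd y).support ⊆ y.support := by
    intro i hi
    rw [HahnSeries.mem_support] at hi ⊢
    intro h
    exact hi (by rw [dd_coeff, h, mul_zero])
  have h1 : ((dd x) * y).coeff m =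
      ∑ ij ∈ Finset.addAntidiagonal x.isPWO_support y.isPWO_support m,
        ((ij.1 : ℂ) * x.coeff ij.1) * y.coeff ij.2 :=
    HahnSeries.coeff_mul_left' x.isPWO_support hx
  have h2 : (x * (dd y)).coeff m =
      ∑ ij ∈ Finset.addAntidiagonal x.isPWO_support y.isPWO_support m,
        x.coeff ij.1 * ((ij.2 : ℂ) * y.coeff ij.2) :=
    HahnSeries.coeff_mul_right' y.isPWO_support hy
  rw [HahnSeries.coeff_add, dd_coeff, HahnSeries.coeff_mul, h1, h2, Finset.mul_sum,
    ← Finset.sum_add_distrib]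
  apply Finset.sum_congr rfl
  intro ij hij
  rw [Finset.mem_addAntidiagonal] at hij
  have : ij.1 + ij.2 = m := hij.2.2
  rw [← this]
  push_cast
  ring

lemma ddE_mulOp (c : K) : ddE * mulOp c = mulOp (dd c) + mulOp c * ddE := by
  ext f
  simp [Module.End.mul_apply, mulOp_apply, ddE_apply, dd_mul]

lemma dd_tpow (w : ℕ) : dd (tpow w) = (w : ℂ) • tpow w := by
  ext m
  simp only [dd_coeff, HahnSeries.coeff_smul, tpow, HahnSeries.coeff_single]
  split_ifs with h
  · subst h; simp
  · simp

lemma tpow_ne_zero (w : ℕ) : tpow w ≠ 0 :=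
  HahnSeries.single_ne_zero one_ne_zero

end DH

end Aux
section Aux2

open Polynomial Finset

namespace DH

def NF (N : ℕ) (α : ℕ → K) : Module.End ℂ K :=
  ∑ i ∈ Finset.range (N + 1), mulOp (α i) * ddE ^ i

lemma opO_eq_NF (N : ℕ) (a : ℕ → PowerSeries ℂ) : opO 1 N a = NF N (fun i => ofPS (a i)) := by
  unfold opO NF
  rw [Xop_one]

lemma NF_add (N : ℕ) (α β : ℕ → K) : NF N α + NF N β = NF N (fun i => α i + β i) := by
  unfold NF
  rw [← Finset.sum_add_distrib]
  refine Finset.sum_congr rfl fun i _ => ?_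
  simp only [mulOp_add, add_mul]

lemma NF_apply (N : ℕ) (α : ℕ → K) (f : K) :
    NF N α f = ∑ i ∈ Finset.range (N+1), α i * ((ddE ^ i) f) := by
  unfold NF
  rw [LinearMap.sum_apply]
  refine Finset.sum_congr rfl fun i _ => ?_
  rw [Module.End.mul_apply, mulOp_apply]

lemma NF_sub (N : ℕ) (α β : ℕ → K) : NF N α - NF N β = NF N (fun i => α i - β i) := by
  ext f
  simp [NF_apply, sub_mul, Finset.sum_sub_distrib]

lemma NF_mask (N M : ℕ) (h : N ≤ M) (α : ℕ → K) :
    NF M (fun i => if i ≤ N then α i else 0) = NF N α := by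
  unfold NF
  rw [← Finset.sum_subset (Finset.range_subset_range.2 (by omega) : Finset.range (N+1) ⊆ _)]
  · refine Finset.sum_congr rfl fun i hi => ?_
    rw [Finset.mem_range] at hi
    simp only []
    rw [if_pos (by omega)]
  · intro i hi hni
    rw [Finset.mem_range] at hi
    simp only [Finset.mem_range] at hni
    simp only []
    rw [if_neg (by omega), mulOp_zero, zero_mul]

lemma NF_sum (N : ℕ) (s : Finset ℕ) (γ : ℕ → ℕ → K) :
    ∑ k ∈ s, NF N (γ k) = NF N (fun i => ∑ k ∈ s, γ k i) := by
  unfold NF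
  rw [Finset.sum_comm]
  refine Finset.sum_congr rfl fun i _ => ?_
  simp only []
  rw [mulOp_sum, Finset.sum_mul]

lemma mulOp_mul_NF (x : K) (N : ℕ) (α : ℕ → K) :
    mulOp x * NF N α = NF N (fun i => x * α i) := by
  unfold NF
  rw [Finset.mul_sum]
  refine Finset.sum_congr rfl fun i _ => ?_
  simp only []
  rw [mulOp_mul, mul_assoc]

lemma NF_mul_ddE (N : ℕ) (α : ℕ → K) :
    NF N α * ddE = NF (N + 1) (fun i => if i = 0 then 0 else α (i - 1)) := by
  unfold NF
  rw [Finset.sum_range_succ' (fun i => mulOp (if i = 0 then (0:K) else α (i-1)) * ddE ^ i) (N+1),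
    Finset.sum_mul]
  simp only [Nat.succ_ne_zero, if_false, Nat.add_sub_cancel, reduceIte, mulOp_zero, zero_mul,
    add_zero, pow_succ, mul_assoc]

lemma exists_ddE_pow_mulOp (j : ℕ) (c : K) : ∃ γ : ℕ → K, ddE ^ j * mulOp c = NF j γ := by
  induction j generalizing c with
  | zero =>
    refine ⟨fun _ => c, ?_⟩
    unfold NF
    simp
  | succ j ih =>
    obtain ⟨γ₁, h₁⟩ := ih (dd c)
    obtain ⟨γ₂, h₂⟩ := ih c
    refine ⟨fun i => (if i ≤ j then γ₁ i else 0) + (if i = 0 then 0 else γ₂ (i-1)), ?_⟩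
    have e : ddE ^ (j+1) * mulOp c = ddE ^ j * (ddE * mulOp c) := by
      rw [← mul_assoc, ← pow_succ]
    rw [e, ddE_mulOp, mul_add, h₁, ← mul_assoc, h₂, NF_mul_ddE,
      ← NF_mask j (j+1) (by omega) γ₁, NF_add]

lemma exists_NF_mul_NF (N₁ N₂ : ℕ) (α β : ℕ → K) :
    ∃ γ : ℕ → K, NF N₁ α * NF N₂ β = NF (N₁ + N₂) γ := by
  have key : ∀ j k : ℕ, ∃ γ : ℕ → K, (mulOp (α j) * ddE ^ j) * (mulOp (β k) * ddE ^ k)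
        = NF (j + k) γ := by
    intro j k
    obtain ⟨γ₀, h₀⟩ := exists_ddE_pow_mulOp j (β k)
    have e1 : (mulOp (α j) * ddE ^ j) * (mulOp (β k) * ddE ^ k)
        = (mulOp (α j) * (NF j γ₀)) * ddE ^ k := by
      rw [← h₀]
      simp only [mul_assoc]
    rw [e1, mulOp_mul_NF]
    set δ : ℕ → K := fun i => α j * γ₀ i with hδ
    clear e1 h₀ hδ
    induction k with
    | zero => exact ⟨δ, by simp⟩
    | succ k ih =>
      obtain ⟨γ, hγ⟩ := ih
      refine ⟨fun i => if i = 0 then 0 else γ (i-1), ?_⟩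
      rw [show j + (k+1) = j + k + 1 by omega,
        show ddE ^ (k+1) = ddE ^ k * ddE by rw [pow_succ], ← mul_assoc, hγ, NF_mul_ddE]
  choose γf hγf using key
  refine ⟨fun i => ∑ j ∈ Finset.range (N₁+1), ∑ k ∈ Finset.range (N₂+1),
    (if i ≤ j + k then γf j k i else 0), ?_⟩
  have expand : NF N₁ α * NF N₂ β = ∑ j ∈ Finset.range (N₁+1), ∑ k ∈ Finset.range (N₂+1),
      (mulOp (α j) * ddE ^ j) * (mulOp (β k) * ddE ^ k) := by
    unfold NF
    rw [Finset.sum_mul_sum]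
  rw [expand]
  have step : ∀ j ∈ Finset.range (N₁+1), ∀ k ∈ Finset.range (N₂+1),
      (mulOp (α j) * ddE ^ j) * (mulOp (β k) * ddE ^ k)
        = NF (N₁ + N₂) (fun i => if i ≤ j + k then γf j k i else 0) := by
    intro j hj k hk
    rw [Finset.mem_range] at hj hk
    rw [hγf j k, ← NF_mask (j+k) (N₁+N₂) (by omega) (γf j k)]
  calc ∑ j ∈ Finset.range (N₁+1), ∑ k ∈ Finset.range (N₂+1),
      (mulOp (α j) * ddE ^ j) * (mulOp (β k) * ddE ^ k)
      = ∑ j ∈ Finset.range (N₁+1), ∑ k ∈ Finset.range (N₂+1),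
        NF (N₁ + N₂) (fun i => if i ≤ j + k then γf j k i else 0) := by
        refine Finset.sum_congr rfl fun j hj => Finset.sum_congr rfl fun k hk => ?_
        exact step j hj k hk
    _ = _ := by
        rw [Finset.sum_congr rfl (fun j _ => NF_sum (N₁+N₂) (Finset.range (N₂+1)) _),
          NF_sum]

end DH

end Aux2
section Aux3

open Polynomial Finset

namespace DH

lemma csmul (r : ℂ) (x : K) : r • x = HahnSeries.C r * x := by
  rw [← HahnSeries.single_zero_mul_eq_smul, HahnSeries.C_apply]

lemma ddE_pow_tpow (w : ℕ) (i : ℕ) : (ddE ^ i) (tpow w) = ((w:ℂ))^i • tpow w := by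
  induction i with
  | zero => simp
  | succ i ih =>
    rw [pow_succ', Module.End.mul_apply, ih, map_smul, ddE_apply, dd_tpow, smul_smul, ← pow_succ]

lemma NF_apply_tpow (N : ℕ) (α : ℕ → K) (w : ℕ) :
    NF N α (tpow w) = (∑ i ∈ Finset.range (N+1), ((w:ℂ))^i • α i) * tpow w := by
  rw [NF_apply, Finset.sum_mul]
  refine Finset.sum_congr rfl fun i _ => ?_
  rw [ddE_pow_tpow, csmul, csmul]
  ring

lemma NF_eq_zero (N : ℕ) (α : ℕ → K) (h : ∀ w : ℕ, NF N α (tpow w) = 0) : NF N α = 0 := by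
  set p : Polynomial K := ∑ i ∈ Finset.range (N+1), Polynomial.C (α i) * X^i with hp
  have hroot : ∀ w : ℕ, p.IsRoot ((w : ℕ) : K) := by
    intro w
    have h1 := h w
    rw [NF_apply_tpow] at h1
    have h2 : (∑ i ∈ Finset.range (N+1), ((w:ℂ))^i • α i) = 0 := by
      rcases mul_eq_zero.1 h1 with h'|h'
      · exact h'
      · exact absurd h' (tpow_ne_zero w)
    have h3 : p.eval ((w : ℕ) : K) = ∑ i ∈ Finset.range (N+1), ((w:ℂ))^i • α i := by
      rw [hp, Polynomial.eval_finset_sum]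
      refine Finset.sum_congr rfl fun i _ => ?_
      rw [Polynomial.eval_mul, Polynomial.eval_C, Polynomial.eval_pow, Polynomial.eval_X,
        csmul, map_pow, map_natCast (HahnSeries.C : ℂ →+* K), mul_comm]
    rw [Polynomial.IsRoot, h3, h2]
  have hinj : Function.Injective (fun w : ℕ => ((w : ℕ) : K)) := by
    intro x y hxy
    simp only at hxy
    rw [← map_natCast (HahnSeries.C : ℂ →+* K), ← map_natCast (HahnSeries.C : ℂ →+* K)] at hxy
    exact Nat.cast_injective (HahnSeries.C_injective hxy)
  have hinf : {x : K | p.IsRoot x}.Infinite :=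
    Set.infinite_of_injective_forall_mem hinj (fun w => hroot w)
  have hp0 : p = 0 := p.eq_zero_of_infinite_isRoot hinf
  have hα : ∀ i ∈ Finset.range (N+1), α i = 0 := by
    intro i hi
    have : p.coeff i = α i := by
      rw [hp, Polynomial.finset_sum_coeff]
      rw [Finset.sum_congr rfl (fun j _ => Polynomial.coeff_C_mul_X_pow (α j) j i)]
      rw [Finset.mem_range] at hi
      rw [Finset.sum_ite_eq (Finset.range (N+1)) i α, if_pos (Finset.mem_range.2 hi)]
    rw [← this, hp0, Polynomial.coeff_zero]
  unfold NF
  refine Finset.sum_eq_zero fun i hi => ?_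
  rw [hα i hi, mulOp_zero, zero_mul]

lemma NF_eq_of_apply_tpow (N₁ N₂ : ℕ) (α β : ℕ → K)
    (h : ∀ w : ℕ, NF N₁ α (tpow w) = NF N₂ β (tpow w)) : NF N₁ α = NF N₂ β := by
  set M := max N₁ N₂ with hM
  have e1 : NF N₁ α = NF M (fun i => if i ≤ N₁ then α i else 0) :=
    (NF_mask N₁ M (le_max_left _ _) α).symm
  have e2 : NF N₂ β = NF M (fun i => if i ≤ N₂ then β i else 0) :=
    (NF_mask N₂ M (le_max_right _ _) β).symm
  have hz : NF M (fun i => (if i ≤ N₁ then α i else 0) - (if i ≤ N₂ then β i else 0)) = 0 := by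
    apply NF_eq_zero
    intro w
    rw [← NF_sub, LinearMap.sub_apply, ← e1, ← e2, h w, sub_self]
  have := NF_sub M (fun i => if i ≤ N₁ then α i else 0) (fun i => if i ≤ N₂ then β i else 0)
  rw [hz] at this
  rw [e1, e2, ← sub_eq_zero, this]

end DH

end Aux3
section Aux4

open Polynomial Finset

namespace DH

def DW (w : ℕ) : Module.End ℂ (PowerSeries ℂ) where
  toFun s := PowerSeries.mk fun q => ((q : ℂ) + w) * PowerSeries.coeff q s
  map_add' s t := by
    ext q
    simp [PowerSeries.coeff_mk, mul_add]
  map_smul' c s := by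
    ext q
    simp [PowerSeries.coeff_mk]
    ring

lemma DW_coeff (w : ℕ) (s : PowerSeries ℂ) (q : ℕ) :
    PowerSeries.coeff q (DW w s) = ((q:ℂ) + w) * PowerSeries.coeff q s := by
  simp [DW, PowerSeries.coeff_mk]

lemma DW_pow_coeff (w j : ℕ) (s : PowerSeries ℂ) (q : ℕ) :
    PowerSeries.coeff q ((DW w ^ j) s) = ((q:ℂ) + w)^j * PowerSeries.coeff q s := by
  induction j generalizing s with
  | zero => simp
  | succ j ih =>
    rw [pow_succ, Module.End.mul_apply, ih (DW w s), DW_coeff, pow_succ]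
    ring

lemma ofPS_coeff_nat (s : PowerSeries ℂ) (q : ℕ) :
    (ofPS s).coeff (q : ℤ) = PowerSeries.coeff q s :=
  HahnSeries.ofPowerSeries_apply_coeff s q

lemma ofPS_coeff_neg (s : PowerSeries ℂ) (m : ℤ) (hm : m < 0) : (ofPS s).coeff m = 0 := by
  unfold ofPS
  rw [HahnSeries.ofPowerSeries_apply]
  apply HahnSeries.embDomain_notin_range
  rintro ⟨q, hq⟩
  replace hq : ((q : ℕ) : ℤ) = m := hq
  omega

lemma ofPS_C (r : ℂ) : ofPS (PowerSeries.C r) = HahnSeries.C r :=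
  HahnSeries.ofPowerSeries_C r

def AwE (w : ℕ) : Module.End ℂ K := ddE + (w:ℂ) • 1

lemma ofPS_DW (w : ℕ) (s : PowerSeries ℂ) : ofPS (DW w s) = AwE w (ofPS s) := by
  ext m
  have hrhs : (AwE w (ofPS s)).coeff m = ((m:ℂ) + w) * (ofPS s).coeff m := by
    rw [AwE, LinearMap.add_apply, LinearMap.smul_apply, Module.End.one_apply, HahnSeries.coeff_add,
      ddE_apply, dd_coeff, HahnSeries.coeff_smul, smul_eq_mul]
    ring
  rw [hrhs]
  rcases le_or_gt 0 m with hm|hm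
  · obtain ⟨q, rfl⟩ := Int.eq_ofNat_of_zero_le hm
    rw [ofPS_coeff_nat, ofPS_coeff_nat, DW_coeff]
    push_cast
    ring
  · rw [ofPS_coeff_neg _ _ hm, ofPS_coeff_neg _ _ hm, mul_zero]

lemma ofPS_DW_pow (w j : ℕ) (s : PowerSeries ℂ) :
    ofPS ((DW w ^ j) s) = ((AwE w)^j) (ofPS s) := by
  induction j generalizing s with
  | zero => simp
  | succ j ih =>
    rw [pow_succ, Module.End.mul_apply, ih (DW w s), ofPS_DW, pow_succ, Module.End.mul_apply]

lemma ddE_pow_tpow_mul (w : ℕ) (j : ℕ) (z : K) :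
    (ddE ^ j) (tpow w * z) = tpow w * ((AwE w ^ j) z) := by
  induction j generalizing z with
  | zero => simp
  | succ j ih =>
    rw [pow_succ', Module.End.mul_apply, ih, ddE_apply, dd_mul, dd_tpow,
      pow_succ' (AwE w) j, Module.End.mul_apply]
    set Y := (AwE w ^ j) z
    rw [show AwE w Y = dd Y + (w:ℂ) • Y by
      rw [AwE, LinearMap.add_apply, LinearMap.smul_apply, Module.End.one_apply, ddE_apply]]
    rw [csmul, csmul]
    ring

end DH

end Aux4
section Aux5

open Polynomial Finset

namespace DH

def Fl (n : ℕ) (a : ℕ → PowerSeries ℂ) (l : ℕ) : Polynomial ℂ :=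
  ∑ i ∈ Finset.range (n + 1), Polynomial.C (PowerSeries.coeff l (a i)) * Polynomial.X ^ i

lemma Fl_zero (n : ℕ) (a : ℕ → PowerSeries ℂ) : Fl n a 0 = red n a := by
  unfold Fl red
  refine Finset.sum_congr rfl fun i _ => ?_
  rw [PowerSeries.coeff_zero_eq_constantCoeff]

lemma Fl_natDegree_le (n : ℕ) (a : ℕ → PowerSeries ℂ) (l : ℕ) : (Fl n a l).natDegree ≤ n := by
  apply Polynomial.natDegree_sum_le_of_forall_le
  intro i hi
  rw [Finset.mem_range] at hi
  exact (Polynomial.natDegree_C_mul_X_pow_le _ _).trans (by omega)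

def Rl (n : ℕ) (a : ℕ → PowerSeries ℂ) (l : ℕ) (prev : ℕ → Polynomial ℂ × Polynomial ℂ) :
    Polynomial ℂ :=
  Fl n a l - ∑ p ∈ Finset.range (l - 1),
    ((prev (p+1)).1.comp (Polynomial.X + Polynomial.C ((l - 1 - p : ℕ) : ℂ))) * (prev (l - 1 - p)).2

open Classical in
def step (n : ℕ) (a : ℕ → PowerSeries ℂ) (g₀ h₀ : Polynomial ℂ) (l : ℕ)
    (prev : ℕ → Polynomial ℂ × Polynomial ℂ) : Polynomial ℂ × Polynomial ℂ :=
  if h : ∃ GH : Polynomial ℂ × Polynomial ℂ, GH.1.natDegree ≤ g₀.natDegree ∧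
      GH.2.natDegree ≤ n - g₀.natDegree ∧
      g₀.comp (Polynomial.X + Polynomial.C (l : ℂ)) * GH.2 + GH.1 * h₀ = Rl n a l prev
  then h.choose else (0, 0)

def seqGH (n : ℕ) (a : ℕ → PowerSeries ℂ) (g₀ h₀ : Polynomial ℂ) :
    ℕ → ℕ → Polynomial ℂ × Polynomial ℂ
  | 0 => fun _ => (g₀, h₀)
  | (l+1) => fun m => if m ≤ l then seqGH n a g₀ h₀ l m else step n a g₀ h₀ (l+1) (seqGH n a g₀ h₀ l)

def GHf (n : ℕ) (a : ℕ → PowerSeries ℂ) (g₀ h₀ : Polynomial ℂ) (m : ℕ) :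
    Polynomial ℂ × Polynomial ℂ :=
  seqGH n a g₀ h₀ m m

lemma GHf_zero (n : ℕ) (a : ℕ → PowerSeries ℂ) (g₀ h₀ : Polynomial ℂ) :
    GHf n a g₀ h₀ 0 = (g₀, h₀) := rfl

lemma GHf_succ (n : ℕ) (a : ℕ → PowerSeries ℂ) (g₀ h₀ : Polynomial ℂ) (l : ℕ) :
    GHf n a g₀ h₀ (l+1) = step n a g₀ h₀ (l+1) (seqGH n a g₀ h₀ l) := by
  unfold GHf
  show (if l + 1 ≤ l then seqGH n a g₀ h₀ l (l+1) else step n a g₀ h₀ (l+1) (seqGH n a g₀ h₀ l)) = _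
  rw [if_neg (by omega)]

lemma seq_coherent (n : ℕ) (a : ℕ → PowerSeries ℂ) (g₀ h₀ : Polynomial ℂ) :
    ∀ l m, m ≤ l → seqGH n a g₀ h₀ l m = GHf n a g₀ h₀ m := by
  intro l
  induction l with
  | zero =>
    intro m hm
    rw [Nat.le_zero.1 hm]
    rfl
  | succ l ih =>
    intro m hm
    rcases le_or_gt m l with h|h
    · show (if m ≤ l then seqGH n a g₀ h₀ l m else _) = _
      rw [if_pos h, ih m h]
    · have : m = l + 1 := by omega
      subst this
      rfl

lemma solve_step (n : ℕ) (g₀ h₀ : Polynomial ℂ) (hg : g₀ ≠ 0)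
    (hh : h₀.natDegree ≤ n - g₀.natDegree) (hdgn : g₀.natDegree ≤ n)
    (l : ℕ) (hc : IsCoprime (g₀.comp (Polynomial.X + Polynomial.C (l:ℂ))) h₀)
    (R : Polynomial ℂ) (hR : R.natDegree ≤ n) :
    ∃ GH : Polynomial ℂ × Polynomial ℂ, GH.1.natDegree ≤ g₀.natDegree ∧
      GH.2.natDegree ≤ n - g₀.natDegree ∧
      g₀.comp (Polynomial.X + Polynomial.C (l : ℂ)) * GH.2 + GH.1 * h₀ = R := by
  set dg := g₀.natDegree with hdg
  set A := g₀.comp (Polynomial.X + Polynomial.C (l:ℂ)) with hA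
  have hXC : (Polynomial.X + Polynomial.C (l:ℂ)).natDegree = 1 := Polynomial.natDegree_X_add_C _
  have hAdeg : A.natDegree = dg := by
    rw [hA, Polynomial.natDegree_comp, hXC, mul_one]
  have hAlead : A.leadingCoeff ≠ 0 := by
    rw [hA, Polynomial.leadingCoeff_comp (by rw [hXC]; omega)]
    have : (Polynomial.X + Polynomial.C (l:ℂ)).leadingCoeff = 1 :=
      (Polynomial.monic_X_add_C _).leadingCoeff
    rw [this, one_pow, mul_one]
    exact Polynomial.leadingCoeff_ne_zero.2 hg
  have hA0 : A ≠ 0 := fun h => hAlead (by rw [h, Polynomial.leadingCoeff_zero])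
  obtain ⟨u, v, huv⟩ := hc
  set c := A.leadingCoeff with hc0def
  have hmon : (A * Polynomial.C c⁻¹).Monic := Polynomial.monic_mul_leadingCoeff_inv hA0
  set G := (v * R) %ₘ (A * Polynomial.C c⁻¹) with hGdef
  set D := (v * R) /ₘ (A * Polynomial.C c⁻¹) with hDdef
  have key : G + (A * Polynomial.C c⁻¹) * D = v * R := Polynomial.modByMonic_add_div (v*R) (A * Polynomial.C c⁻¹)
  set H := u * R + h₀ * D * Polynomial.C c⁻¹ with hHdef
  have main : A * H + G * h₀ = R := by
    rw [hHdef]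
    linear_combination R * huv + h₀ * key
  have hGdeg : G.natDegree ≤ dg := by
    have h1 : G.degree < (A * Polynomial.C c⁻¹).degree := Polynomial.degree_modByMonic_lt _ hmon
    have h2 : (A * Polynomial.C c⁻¹).degree = A.degree :=
      Polynomial.degree_mul_leadingCoeff_inv A hA0
    rw [h2, Polynomial.degree_eq_natDegree hA0, hAdeg] at h1
    exact Polynomial.natDegree_le_iff_degree_le.2 (le_of_lt h1)
  have hHdeg : H.natDegree ≤ n - dg := by
    by_cases hH0 : H = 0
    · rw [hH0]
      simp
    · have e2 : A * H = R - G * h₀ := by linear_combination main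
      have d1 : (A * H).natDegree = dg + H.natDegree := by
        rw [Polynomial.natDegree_mul hA0 hH0, hAdeg]
      have d2 : (R - G * h₀).natDegree ≤ n := by
        refine le_trans (Polynomial.natDegree_sub_le _ _) (max_le hR ?_)
        refine le_trans (Polynomial.natDegree_mul_le) ?_
        omega
      have : dg + H.natDegree ≤ n := by rw [← d1, e2]; exact d2
      omega
  exact ⟨(G, H), hGdeg, hHdeg, main⟩

end DH

end Aux5

open Polynomial Finset DH

/-- Differential Hensel's Lemma for `m = 1`: if `f̄ = g₀ h₀` with `gcd(g₀(x+k), h₀(x)) = 1`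
for all positive integers `k`, then the factorisation lifts to `O{x, δ₁}`. -/
theorem stmt_5 (n : ℕ) (a : ℕ → PowerSeries ℂ) (g₀ h₀ : Polynomial ℂ)
    (hf0 : red n a ≠ 0) (hfact : red n a = g₀ * h₀)
    (hcop : ∀ k : ℕ, 0 < k → IsCoprime (g₀.comp (Polynomial.X + Polynomial.C (k : ℂ))) h₀) :
    ∃ b c : ℕ → PowerSeries ℂ,
      opO 1 n a = opO 1 g₀.natDegree b * opO 1 (n - g₀.natDegree) c ∧
      red g₀.natDegree b = g₀ ∧ red (n - g₀.natDegree) c = h₀ := by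
  classical
  have hg0 : g₀ ≠ 0 := by
    rintro rfl
    rw [zero_mul] at hfact
    exact hf0 hfact
  have hh0 : h₀ ≠ 0 := by
    rintro rfl
    rw [mul_zero] at hfact
    exact hf0 hfact
  have hredn : (red n a).natDegree ≤ n := by
    unfold red
    apply Polynomial.natDegree_sum_le_of_forall_le
    intro i hi
    rw [Finset.mem_range] at hi
    exact (Polynomial.natDegree_C_mul_X_pow_le _ _).trans (by omega)
  have hsum : g₀.natDegree + h₀.natDegree ≤ n := by
    rw [← Polynomial.natDegree_mul hg0 hh0, ← hfact]
    exact hredn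
  have hdgn : g₀.natDegree ≤ n := by omega
  have hhdh : h₀.natDegree ≤ n - g₀.natDegree := by omega
  -- invariants of the recursive construction
  have hdeg : ∀ m : ℕ, (GHf n a g₀ h₀ m).1.natDegree ≤ g₀.natDegree ∧
      (GHf n a g₀ h₀ m).2.natDegree ≤ n - g₀.natDegree ∧
      (∀ l : ℕ, m = l + 1 →
        g₀.comp (Polynomial.X + Polynomial.C ((m : ℕ) : ℂ)) * (GHf n a g₀ h₀ m).2
          + (GHf n a g₀ h₀ m).1 * h₀ = Rl n a m (seqGH n a g₀ h₀ l)) := by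
    intro m
    induction m using Nat.strong_induction_on with
    | _ m ih =>
      match m with
      | 0 =>
        refine ⟨le_refl _, hhdh, fun l hl => by omega⟩
      | (l+1) =>
        have hRdeg : (Rl n a (l+1) (seqGH n a g₀ h₀ l)).natDegree ≤ n := by
          unfold Rl
          refine le_trans (Polynomial.natDegree_sub_le _ _) (max_le (Fl_natDegree_le n a _) ?_)
          apply Polynomial.natDegree_sum_le_of_forall_le
          intro p hp
          rw [Finset.mem_range] at hp
          have hp1 : p + 1 ≤ l := by omega
          have hq : l + 1 - 1 - p ≤ l := by omega
          rw [seq_coherent n a g₀ h₀ l (p+1) hp1, seq_coherent n a g₀ h₀ l _ hq]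
          refine le_trans (Polynomial.natDegree_mul_le) ?_
          have d1 := (ih (p+1) (by omega)).1
          have d2 := (ih (l+1-1-p) (by omega)).2.1
          rw [Polynomial.natDegree_comp, Polynomial.natDegree_X_add_C, mul_one]
          omega
        have hex := solve_step n g₀ h₀ hg0 hhdh hdgn ((l+1 : ℕ)) (hcop (l+1) (Nat.succ_pos l))
          _ hRdeg
        rw [GHf_succ]
        unfold step
        rw [dif_pos hex]
        refine ⟨hex.choose_spec.1, hex.choose_spec.2.1, fun l' hl' => ?_⟩
        obtain rfl : l' = l := by omega
        exact hex.choose_spec.2.2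
  -- the graded factorisation identity
  have hINV : ∀ l : ℕ, ∑ pq ∈ Finset.HasAntidiagonal.antidiagonal l,
      ((GHf n a g₀ h₀ pq.1).1.comp (Polynomial.X + Polynomial.C ((pq.2 : ℕ) : ℂ)))
        * (GHf n a g₀ h₀ pq.2).2 = Fl n a l := by
    intro l
    match l with
    | 0 =>
      rw [Finset.Nat.antidiagonal_zero, Finset.sum_singleton, Fl_zero n a, hfact, GHf_zero]
      simp
    | (l+1) =>
      rw [Finset.Nat.sum_antidiagonal_eq_sum_range_succ_mk, Finset.sum_range_succ,
        Finset.sum_range_succ']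
      have heq := (hdeg (l+1)).2.2 l rfl
      unfold Rl at heq
      have hco : ∀ p ∈ Finset.range (l+1-1),
          ((seqGH n a g₀ h₀ l (p+1)).1.comp
              (Polynomial.X + Polynomial.C ((l+1-1-p : ℕ) : ℂ)))
            * (seqGH n a g₀ h₀ l (l+1-1-p)).2
          = ((GHf n a g₀ h₀ (p+1)).1.comp
              (Polynomial.X + Polynomial.C ((l+1-1-p : ℕ) : ℂ)))
            * (GHf n a g₀ h₀ (l+1-1-p)).2 := by
        intro p hp
        rw [Finset.mem_range] at hp
        rw [seq_coherent n a g₀ h₀ l (p+1) (by omega), seq_coherent n a g₀ h₀ l _ (by omega)]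
      rw [Finset.sum_congr rfl hco] at heq
      simp only [Nat.add_sub_cancel] at heq ⊢
      simp only [Nat.sub_self, Nat.cast_zero, map_zero, add_zero, Polynomial.comp_X,
        Nat.sub_zero, GHf_zero, Nat.succ_sub_succ_eq_sub] at heq ⊢
      linear_combination heq
  -- the lifted coefficients
  set b : ℕ → PowerSeries ℂ := fun j => PowerSeries.mk fun p => ((GHf n a g₀ h₀ p).1.coeff j)
    with hbdef
  set c : ℕ → PowerSeries ℂ := fun k => PowerSeries.mk fun q => ((GHf n a g₀ h₀ q).2.coeff k)
    with hcdef
  refine ⟨b, c, ?_, ?_, ?_⟩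
  · -- operator identity
    rw [opO_eq_NF, opO_eq_NF, opO_eq_NF]
    obtain ⟨γ, hγ⟩ := exists_NF_mul_NF g₀.natDegree (n - g₀.natDegree)
      (fun i => ofPS (b i)) (fun i => ofPS (c i))
    rw [hγ]
    apply NF_eq_of_apply_tpow
    intro w
    rw [← hγ, Module.End.mul_apply, NF_apply_tpow, NF_apply_tpow]
    set γK : K := ∑ k ∈ Finset.range (n - g₀.natDegree + 1), ((w:ℂ))^k • ofPS (c k) with hγK
    rw [mul_comm γK (tpow (w:ℤ))]
    have hNFmul : NF g₀.natDegree (fun i => ofPS (b i)) (tpow (w:ℤ) * γK)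
        = tpow (w:ℤ) * ∑ j ∈ Finset.range (g₀.natDegree + 1), ofPS (b j) * ((AwE w ^ j) γK) := by
      rw [NF_apply]
      rw [Finset.mul_sum (Finset.range (g₀.natDegree + 1))
        (fun j => ofPS (b j) * ((AwE w ^ j) γK)) (tpow (w:ℤ))]
      refine Finset.sum_congr rfl fun j _ => ?_
      rw [ddE_pow_tpow_mul]
      ring
    rw [hNFmul, mul_comm (∑ i ∈ Finset.range (n+1), ((w:ℂ))^i • ofPS (a i)) (tpow (w:ℤ))]
    congr 1
    -- CORE identity in K, reduced to power series
    set sps : PowerSeries ℂ := ∑ k ∈ Finset.range (n - g₀.natDegree + 1),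
      PowerSeries.C ((w:ℂ)^k) * c k with hsps
    have hγKps : γK = ofPS sps := by
      rw [hγK, hsps, map_sum]
      refine Finset.sum_congr rfl fun k _ => ?_
      rw [csmul, map_mul, ofPS_C]
    have hPSCORE : ∑ i ∈ Finset.range (n+1), PowerSeries.C ((w:ℂ)^i) * a i
        = ∑ j ∈ Finset.range (g₀.natDegree + 1), b j * ((DW w ^ j) sps) := by
      ext l
      rw [map_sum, map_sum]
      have hL : ∑ i ∈ Finset.range (n+1),
          PowerSeries.coeff l (PowerSeries.C ((w:ℂ)^i) * a i)
          = (Fl n a l).eval ((w:ℂ)) := by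
        unfold Fl
        rw [Polynomial.eval_finset_sum]
        refine Finset.sum_congr rfl fun i _ => ?_
        rw [PowerSeries.coeff_C_mul, Polynomial.eval_mul, Polynomial.eval_C,
          Polynomial.eval_pow, Polynomial.eval_X, mul_comm]
      rw [hL]
      have hq : ∀ q : ℕ, PowerSeries.coeff q sps = (GHf n a g₀ h₀ q).2.eval ((w:ℂ)) := by
        intro q
        rw [hsps, map_sum,
          Polynomial.eval_eq_sum_range' (lt_of_le_of_lt (hdeg q).2.1 (Nat.lt_succ_self _))]
        refine Finset.sum_congr rfl fun k _ => ?_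
        rw [PowerSeries.coeff_C_mul, hcdef]
        simp only [PowerSeries.coeff_mk]
        ring
      have hR : ∀ j, PowerSeries.coeff l (b j * ((DW w ^ j) sps))
          = ∑ pq ∈ Finset.HasAntidiagonal.antidiagonal l, (GHf n a g₀ h₀ pq.1).1.coeff j *
              ((((pq.2:ℕ):ℂ) + w)^j * (GHf n a g₀ h₀ pq.2).2.eval ((w:ℂ))) := by
        intro j
        rw [PowerSeries.coeff_mul]
        refine Finset.sum_congr rfl fun pq hpq => ?_
        rw [DW_pow_coeff, hq pq.2, hbdef]
        simp only [PowerSeries.coeff_mk]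
      rw [Finset.sum_congr rfl (fun j _ => hR j), Finset.sum_comm]
      have hsw : ∀ pq ∈ Finset.HasAntidiagonal.antidiagonal l,
          ∑ j ∈ Finset.range (g₀.natDegree + 1), (GHf n a g₀ h₀ pq.1).1.coeff j *
              ((((pq.2:ℕ):ℂ) + w)^j * (GHf n a g₀ h₀ pq.2).2.eval ((w:ℂ)))
          = (GHf n a g₀ h₀ pq.1).1.eval ((((pq.2:ℕ):ℂ)) + w)
              * (GHf n a g₀ h₀ pq.2).2.eval ((w:ℂ)) := by
        intro pq _
        rw [Polynomial.eval_eq_sum_range' (lt_of_le_of_lt (hdeg pq.1).1 (Nat.lt_succ_self _)),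
          Finset.sum_mul]
        refine Finset.sum_congr rfl fun j _ => ?_
        ring
      rw [Finset.sum_congr rfl hsw]
      have hev := congrArg (Polynomial.eval ((w:ℂ))) (hINV l)
      rw [Polynomial.eval_finset_sum] at hev
      rw [← hev]
      refine Finset.sum_congr rfl fun pq _ => ?_
      rw [Polynomial.eval_mul, Polynomial.eval_comp, Polynomial.eval_add, Polynomial.eval_X,
        Polynomial.eval_C, add_comm]
    calc ∑ i ∈ Finset.range (n+1), ((w:ℂ))^i • ofPS (a i)
        = ofPS (∑ i ∈ Finset.range (n+1), PowerSeries.C ((w:ℂ)^i) * a i) := by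
          rw [map_sum]
          refine Finset.sum_congr rfl fun i _ => ?_
          rw [csmul, map_mul, ofPS_C]
      _ = ofPS (∑ j ∈ Finset.range (g₀.natDegree + 1), b j * ((DW w ^ j) sps)) := by
          rw [hPSCORE]
      _ = ∑ j ∈ Finset.range (g₀.natDegree + 1), ofPS (b j) * ((AwE w ^ j) γK) := by
          rw [map_sum]
          refine Finset.sum_congr rfl fun j _ => ?_
          rw [map_mul, hγKps, ofPS_DW_pow]
  · -- red b = g₀
    unfold red
    have : ∀ i, PowerSeries.constantCoeff (R := ℂ) (b i) = g₀.coeff i := by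
      intro i
      rw [hbdef]
      simp [PowerSeries.constantCoeff_mk, GHf_zero]
    rw [Finset.sum_congr rfl (fun i _ => by rw [this i])]
    exact (Polynomial.as_sum_range_C_mul_X_pow g₀).symm
  · -- red c = h₀
    unfold red
    have : ∀ i, PowerSeries.constantCoeff (R := ℂ) (c i) = h₀.coeff i := by
      intro i
      rw [hcdef]
      simp [PowerSeries.constantCoeff_mk, GHf_zero]
    rw [Finset.sum_congr rfl (fun i _ => by rw [this i])]
    have := Polynomial.as_sum_range' h₀ (n - g₀.natDegree + 1) (by omega)
    rw [this]
    refine Finset.sum_congr rfl fun i _ => ?_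
    rw [Polynomial.C_mul_X_pow_eq_monomial]
    congr 1
    rw [← this]
end
end

section
/- Every monic differential polynomial f ∈ O{x, δ₁} admits a factorisation f = (x − Λ) h with Λ ∈ O and h ∈ O{x, δ₁}. -/
set_option maxHeartbeats 1000000
set_option synthInstance.maxHeartbeats 1000000

noncomputable section

lemma dd_coeff (f : K) (m : ℤ) : (dd f).coeff m = (m : ℂ) * f.coeff m := rfl

lemma dd_support (f : K) : (dd f).support ⊆ f.support := by
  intro m hm
  rw [HahnSeries.mem_support] at hm ⊢
  exact fun h => hm (by rw [dd_coeff, h, mul_zero])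

lemma dd_mul (f g : K) : dd (f * g) = dd f * g + f * dd g := by
  ext m
  rw [HahnSeries.coeff_add, dd_coeff,
    HahnSeries.coeff_mul_left' f.isPWO_support (dd_support f),
    HahnSeries.coeff_mul_right' g.isPWO_support (dd_support g),
    HahnSeries.coeff_mul, ← Finset.sum_add_distrib, Finset.mul_sum]
  refine Finset.sum_congr rfl (fun ij hij => ?_)
  rw [Finset.mem_addAntidiagonal] at hij
  rw [dd_coeff, dd_coeff, ← hij.2.2]
  push_cast
  ring

def Dps (f : PowerSeries ℂ) : PowerSeries ℂ := PowerSeries.mk fun k => (k : ℂ) * PowerSeries.coeff k f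

lemma Dps_zero : Dps 0 = 0 := by
  apply PowerSeries.ext
  intro k
  simp [Dps]

lemma mulOp_apply (a f : K) : mulOp a f = a * f := rfl

lemma mulOp_one : mulOp 1 = 1 := by
  ext f; simp [mulOp_apply]

lemma mulOp_zero : mulOp 0 = 0 := by
  ext f; simp [mulOp_apply]

lemma mulOp_mul (a b : K) : mulOp (a * b) = mulOp a * mulOp b := by
  ext f; simp [mulOp_apply, Module.End.mul_apply, mul_assoc]

lemma mulOp_add (a b : K) : mulOp (a + b) = mulOp a + mulOp b := by
  ext f; simp [mulOp_apply, add_mul]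

lemma mulOp_sub (a b : K) : mulOp (a - b) = mulOp a - mulOp b := by
  ext f; simp [mulOp_apply, sub_mul]

lemma Xop_one : Xop 1 = ddE := by
  rw [Xop]; norm_num [mulOp_one]

lemma ddE_mulOp (a : K) : ddE * mulOp a = mulOp a * ddE + mulOp (dd a) := by
  ext f
  simp only [Module.End.mul_apply, LinearMap.add_apply, mulOp_apply, ddE]
  rw [dd_mul]; exact add_comm _ _

lemma ofPS_coeff_neg (f : PowerSeries ℂ) (m : ℤ) (hm : m < 0) : (ofPS f).coeff m = 0 := by
  rw [ofPS, HahnSeries.ofPowerSeries_apply]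
  apply HahnSeries.embDomain_notin_range
  rintro ⟨k, hk⟩
  have : ((k : ℤ)) = m := hk
  omega

lemma ofPS_Dps (f : PowerSeries ℂ) : ofPS (Dps f) = dd (ofPS f) := by
  ext m
  rw [dd_coeff]
  rcases le_or_gt 0 m with h | h
  · lift m to ℕ using h
    rw [show ofPS (Dps f) = ofPS (Dps f) from rfl, ofPS, HahnSeries.ofPowerSeries_apply_coeff,
      HahnSeries.ofPowerSeries_apply_coeff, Dps, PowerSeries.coeff_mk]
    norm_num
  · rw [ofPS_coeff_neg _ _ h, ofPS_coeff_neg _ _ h, mul_zero]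


def dfun (n : ℕ) (A : ℕ → ℕ → ℂ) (lam : ℕ → ℂ) : ℕ → ℕ → ℂ
  | 0 => fun k => A n k
  | m+1 => fun k => A (n-1-m) k - ((k:ℂ) - lam 0) * dfun n A lam m k
      + ∑ j ∈ Finset.Icc 1 k, lam j * dfun n A lam m (k-j)

def gfun (n : ℕ) (A : ℕ → ℕ → ℂ) (lam : ℕ → ℂ) (k : ℕ) : ℕ → ℂ
  | 0 => 0
  | m+1 => (lam 0 - (k:ℂ)) * gfun n A lam k m + dfun n A lam m 0

lemma d_congr (n : ℕ) (A : ℕ → ℕ → ℂ) {lam lam' : ℕ → ℂ} :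
    ∀ (m : ℕ) {k : ℕ}, (∀ j ≤ k, lam j = lam' j) →
      dfun n A lam m k = dfun n A lam' m k := by
  intro m
  induction m with
  | zero => intro k h; rfl
  | succ m ih =>
    intro k h
    simp only [dfun]
    rw [h 0 (Nat.zero_le k), ih h]
    congr 1
    refine Finset.sum_congr rfl (fun j hj => ?_)
    rw [Finset.mem_Icc] at hj
    rw [h j hj.2, ih (fun j' hj' => h j' (le_trans hj' (Nat.sub_le k j)))]

lemma g_congr (n : ℕ) (A : ℕ → ℕ → ℂ) {lam lam' : ℕ → ℂ} (h0 : lam 0 = lam' 0) (k : ℕ) :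
    ∀ m, gfun n A lam k m = gfun n A lam' k m := by
  intro m
  induction m with
  | zero => rfl
  | succ m ih =>
    simp only [gfun]
    rw [h0, ih, d_congr n A m (lam' := lam') (fun j hj => by
      rw [Nat.le_zero] at hj; rw [hj, h0])]

lemma sum_split (f : ℕ → ℂ) (k : ℕ) :
    ∑ j ∈ Finset.range (k+1), f j = f 0 + ∑ j ∈ Finset.Icc 1 k, f j := by
  rw [Finset.range_eq_Ico, ← Finset.sum_Ico_consecutive _ (by omega : 0 ≤ 1) (by omega : 1 ≤ k+1),
    Finset.Ico_add_one_right_eq_Icc]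
  congr 1
  simp

lemma icc_split (f : ℕ → ℂ) (k : ℕ) (hk : 1 ≤ k) :
    ∑ j ∈ Finset.Icc 1 k, f j = (∑ j ∈ Finset.Icc 1 (k-1), f j) + f k := by
  obtain ⟨k, rfl⟩ := Nat.exists_eq_add_of_le hk
  rw [show 1 + k - 1 = k by omega, add_comm 1 k]
  exact Finset.sum_Icc_succ_top (by omega) f

lemma d_affine (n : ℕ) (A : ℕ → ℕ → ℂ) (lam : ℕ → ℂ) (k : ℕ) (hk : 1 ≤ k) :
    ∀ m, dfun n A lam m k =
      dfun n A (Function.update lam k 0) m k + lam k * gfun n A lam k m := by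
  have hupd : ∀ j, j ≠ k → Function.update lam k 0 j = lam j := by
    intro j hj; exact Function.update_of_ne hj 0 lam
  intro m
  induction m with
  | zero => simp [dfun, gfun]
  | succ m ih =>
    simp only [dfun, gfun]
    rw [ih]
    rw [icc_split _ k hk, icc_split (fun j => Function.update lam k 0 j * dfun n A (Function.update lam k 0) m (k-j)) k hk]
    rw [Function.update_self]
    have hrow0 : dfun n A (Function.update lam k 0) m (k-k) = dfun n A lam m 0 := by
      rw [Nat.sub_self]
      exact d_congr n A m (fun j hj => by rw [Nat.le_zero] at hj; subst hj; exact hupd 0 (by omega))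
    have hsum : ∀ j ∈ Finset.Icc 1 (k-1),
        lam j * dfun n A lam m (k-j) =
          Function.update lam k 0 j * dfun n A (Function.update lam k 0) m (k-j) := by
      intro j hj
      rw [Finset.mem_Icc] at hj
      rw [hupd j (by omega), d_congr n A m (fun j' hj' => (hupd j' (by omega)).symm)]
    rw [Finset.sum_congr rfl hsum]
    rw [hupd 0 (by omega), Nat.sub_self]
    ring

lemma horner (z : ℂ) (e b : ℕ → ℂ) (h : ∀ m, e (m+1) = z * e m + b m) :
    ∀ m, e m = e 0 * z^m + ∑ ℓ ∈ Finset.range m, b ℓ * z^(m-1-ℓ) := by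
  intro m
  induction m with
  | zero => simp
  | succ m ih =>
    rw [h m, ih, Finset.sum_range_succ]
    rw [show m + 1 - 1 - m = 0 by omega, pow_zero, mul_one]
    rw [mul_add, Finset.mul_sum]
    have hs : ∀ i ∈ Finset.range m, z * (b i * z ^ (m - 1 - i)) = b i * z ^ (m + 1 - 1 - i) := by
      intro i hi
      rw [Finset.mem_range] at hi
      rw [show m + 1 - 1 - i = (m - 1 - i) + 1 by omega, pow_succ]
      ring
    rw [Finset.sum_congr rfl hs]
    ring

/-- value of `∑ i ≤ n, A i 0 * z^i` -/
def pev (n : ℕ) (A : ℕ → ℕ → ℂ) (z : ℂ) : ℂ := ∑ i ∈ Finset.range (n+1), A i 0 * z^i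

lemma d_row0 (n : ℕ) (A : ℕ → ℕ → ℂ) (lam : ℕ → ℂ) (m : ℕ) :
    dfun n A lam (m+1) 0 = lam 0 * dfun n A lam m 0 + A (n-1-m) 0 := by
  simp only [dfun]
  rw [show Finset.Icc 1 0 = ∅ from Finset.Icc_eq_empty (by omega), Finset.sum_empty]
  push_cast
  ring

lemma d_n_zero (n : ℕ) (A : ℕ → ℕ → ℂ) (lam : ℕ → ℂ) :
    dfun n A lam n 0 = pev n A (lam 0) := by
  rw [horner (lam 0) (fun m => dfun n A lam m 0) (fun m => A (n-1-m) 0) (d_row0 n A lam) n]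
  rw [pev, Finset.sum_range_succ]
  rw [show dfun n A lam 0 0 = A n 0 from rfl]
  rw [← Finset.sum_range_reflect (fun i => A i 0 * (lam 0)^i) n]
  ring

lemma g_eval (n : ℕ) (A : ℕ → ℕ → ℂ) (lam : ℕ → ℂ) (k : ℕ) :
    (- (k:ℂ)) * gfun n A lam k n + dfun n A lam n 0 = pev n A (lam 0 - k) := by
  set z : ℂ := lam 0 - k with hz
  have hzl : z - lam 0 = -(k:ℂ) := by rw [hz]; ring
  have key := horner z (fun m => (z - lam 0) * gfun n A lam k m + dfun n A lam m 0)
      (fun m => A (n-1-m) 0) (fun m => by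
        simp only [gfun]
        rw [d_row0, show lam 0 - (k:ℂ) = z from hz.symm]
        ring)
  have e0 : (z - lam 0) * gfun n A lam k 0 + dfun n A lam 0 0 = A n 0 := by
    simp [gfun, dfun]
  have := key n
  simp only [e0] at this
  rw [hzl] at this
  rw [this, pev, Finset.sum_range_succ,
    ← Finset.sum_range_reflect (fun i => A i 0 * z^i) n]
  ring

def lamAux (n : ℕ) (A : ℕ → ℕ → ℂ) (l0 : ℂ) : ℕ → (ℕ → ℂ)
  | 0 => fun j => if j = 0 then l0 else 0
  | k+1 => Function.update (lamAux n A l0 k) (k+1)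
      (-(dfun n A (lamAux n A l0 k) n (k+1)) / gfun n A (lamAux n A l0 k) (k+1) n)

def lamF (n : ℕ) (A : ℕ → ℕ → ℂ) (l0 : ℂ) : ℕ → ℂ := fun k => lamAux n A l0 k k

lemma lamAux_gt (n : ℕ) (A : ℕ → ℕ → ℂ) (l0 : ℂ) :
    ∀ k j, k < j → lamAux n A l0 k j = 0 := by
  intro k
  induction k with
  | zero => intro j hj; simp [lamAux]; omega
  | succ k ih =>
    intro j hj
    simp only [lamAux]
    rw [Function.update_of_ne (by omega)]
    exact ih j (by omega)

lemma lamAux_agree (n : ℕ) (A : ℕ → ℕ → ℂ) (l0 : ℂ) :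
    ∀ k j, j ≤ k → lamAux n A l0 k j = lamF n A l0 j := by
  intro k
  induction k with
  | zero => intro j hj; rw [Nat.le_zero] at hj; subst hj; rfl
  | succ k ih =>
    intro j hj
    rcases Nat.eq_or_lt_of_le hj with h | h
    · subst h; rfl
    · simp only [lamAux]
      rw [Function.update_of_ne (by omega)]
      exact ih j (by omega)

lemma lamF_zero (n : ℕ) (A : ℕ → ℕ → ℂ) (l0 : ℂ) : lamF n A l0 0 = l0 := by
  simp [lamF, lamAux]

lemma dn_zero (n : ℕ) (A : ℕ → ℕ → ℂ) (l0 : ℂ)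
    (hroot : pev n A l0 = 0) (hnr : ∀ k : ℕ, 1 ≤ k → pev n A (l0 - k) ≠ 0) :
    ∀ k, dfun n A (lamF n A l0) n k = 0 := by
  intro k
  have hcg : ∀ m, dfun n A (lamF n A l0) m k = dfun n A (lamAux n A l0 k) m k :=
    fun m => d_congr n A m (fun j hj => (lamAux_agree n A l0 k j hj).symm)
  rw [hcg n]
  cases k with
  | zero =>
    rw [d_n_zero, show lamAux n A l0 0 0 = l0 by simp [lamAux]]
    exact hroot
  | succ k =>
    set L := lamAux n A l0 k with hL
    have hL0 : L 0 = l0 := by rw [hL, lamAux_agree n A l0 k 0 (by omega), lamF_zero]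
    have hd0 : dfun n A L n 0 = 0 := by rw [d_n_zero, hL0]; exact hroot
    have hs : gfun n A L (k+1) n ≠ 0 := by
      intro h
      have := g_eval n A L (k+1)
      rw [h, hd0, hL0, mul_zero, zero_add] at this
      exact hnr (k+1) (by omega) this.symm
    have hup : lamAux n A l0 (k+1) = Function.update L (k+1)
        (-(dfun n A L n (k+1)) / gfun n A L (k+1) n) := rfl
    rw [d_affine n A (lamAux n A l0 (k+1)) (k+1) (by omega) n]
    have h1 : Function.update (lamAux n A l0 (k+1)) (k+1) 0 = L := by
      rw [hup, Function.update_idem]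
      have : L (k+1) = 0 := lamAux_gt n A l0 k (k+1) (by omega)
      rw [← this, Function.update_eq_self]
    have h2 : lamAux n A l0 (k+1) (k+1) = -(dfun n A L n (k+1)) / gfun n A L (k+1) n := by
      rw [hup, Function.update_self]
    have h3 : gfun n A (lamAux n A l0 (k+1)) (k+1) n = gfun n A L (k+1) n := by
      refine g_congr n A ?_ (k+1) n
      rw [hup, Function.update_of_ne (by omega)]
    rw [h1, h2, h3, div_mul_cancel₀ _ hs]
    ring

lemma exists_l0 (n : ℕ) (hn : 1 ≤ n) (A : ℕ → ℕ → ℂ) (hA : A n 0 = 1) :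
    ∃ l0 : ℂ, pev n A l0 = 0 ∧ ∀ k : ℕ, 1 ≤ k → pev n A (l0 - k) ≠ 0 := by
  set P : Polynomial ℂ := ∑ i ∈ Finset.range (n+1), Polynomial.C (A i 0) * Polynomial.X ^ i with hP
  have hev : ∀ z, P.eval z = pev n A z := by
    intro z
    rw [hP, Polynomial.eval_finset_sum, pev]
    simp
  have hco : P.coeff n = 1 := by
    rw [hP, Polynomial.finset_sum_coeff]
    rw [Finset.sum_eq_single n]
    · simp [hA]
    · intro i hi hne
      simp [Polynomial.coeff_X_pow, Ne.symm hne]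
    · intro h
      exact absurd (Finset.self_mem_range_succ n) h
  have hP0 : P ≠ 0 := by
    intro h
    rw [h, Polynomial.coeff_zero] at hco
    exact one_ne_zero hco.symm
  have hdeg : 0 < P.degree := by
    have hcn : P.coeff n ≠ 0 := by rw [hco]; exact one_ne_zero
    refine lt_of_lt_of_le ?_ (Polynomial.le_degree_of_ne_zero hcn)
    exact_mod_cast hn
  obtain ⟨z₀, hz₀⟩ := Complex.exists_root hdeg
  have hne : (P.roots.toFinset).Nonempty :=
    ⟨z₀, Multiset.mem_toFinset.mpr ((Polynomial.mem_roots hP0).mpr hz₀)⟩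
  obtain ⟨l0, hl0S, hmin⟩ := Finset.exists_min_image P.roots.toFinset (fun z => z.re) hne
  refine ⟨l0, ?_, ?_⟩
  · rw [← hev]
    exact (Polynomial.mem_roots hP0).mp (Multiset.mem_toFinset.mp hl0S)
  · intro k hk h
    have hmem : (l0 - (k:ℂ)) ∈ P.roots.toFinset := by
      refine Multiset.mem_toFinset.mpr ((Polynomial.mem_roots hP0).mpr ?_)
      rw [Polynomial.IsRoot, hev]
      exact h
    have := hmin _ hmem
    have hre : (l0 - (k:ℂ)).re = l0.re - k := by
      simp [Complex.sub_re]
    rw [hre] at this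
    have : (1:ℝ) ≤ k := by exact_mod_cast hk
    linarith [hmin _ hmem, hre ▸ hmin _ hmem]

/-- Every monic differential polynomial `f ∈ O{x, δ₁}` (of degree `n ≥ 1`) factors as
`(x - Λ) h` with `Λ ∈ O` and `h ∈ O{x, δ₁}`. -/
theorem stmt_6 (n : ℕ) (hn : 1 ≤ n) (a : ℕ → PowerSeries ℂ) (hmonic : a n = 1) :
    ∃ (Λ : PowerSeries ℂ) (c : ℕ → PowerSeries ℂ),
      opO 1 n a = (Xop 1 - mulOp (ofPS Λ)) * opO 1 (n - 1) c := by
  classical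
  set A : ℕ → ℕ → ℂ := fun i k => PowerSeries.coeff k (a i) with hAdef
  have hA : A n 0 = 1 := by simp [hAdef, hmonic]
  obtain ⟨l0, h1, h2⟩ := exists_l0 n hn A hA
  set lam : ℕ → ℂ := lamF n A l0 with hlam
  have hdn : ∀ k, dfun n A lam n k = 0 := dn_zero n A l0 h1 h2
  set Λ : PowerSeries ℂ := PowerSeries.mk lam with hL
  set c : ℕ → PowerSeries ℂ := fun i => PowerSeries.mk fun k => dfun n A lam (n-1-i) k with hc
  refine ⟨Λ, c, ?_⟩
  have hmulc : ∀ (m k : ℕ), PowerSeries.coeff k (Λ * PowerSeries.mk (fun k' => dfun n A lam m k'))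
      = ∑ j ∈ Finset.range (k+1), lam j * dfun n A lam m (k - j) := by
    intro m k
    rw [PowerSeries.coeff_mul, Finset.Nat.sum_antidiagonal_eq_sum_range_succ_mk]
    refine Finset.sum_congr rfl (fun j hj => ?_)
    rw [hL, PowerSeries.coeff_mk, PowerSeries.coeff_mk]
  have hstep : ∀ i k : ℕ, i ≤ n - 1 →
      A i k = dfun n A lam (n - i) k +
        ((k:ℂ) * dfun n A lam (n-1-i) k
          - ∑ j ∈ Finset.range (k+1), lam j * dfun n A lam (n-1-i) (k - j)) := by
    intro i k hi
    have hm : n - i = (n - 1 - i) + 1 := by omega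
    have hni : n - 1 - (n - 1 - i) = i := by omega
    rw [hm]
    simp only [dfun]
    rw [hni, sum_split (fun j => lam j * dfun n A lam (n-1-i) (k - j)) k, Nat.sub_zero]
    ring
  have hcoeffDps : ∀ (m k : ℕ), PowerSeries.coeff k (Dps (PowerSeries.mk (fun k' => dfun n A lam m k')))
      = (k:ℂ) * dfun n A lam m k := by
    intro m k
    rw [Dps, PowerSeries.coeff_mk, PowerSeries.coeff_mk]
  have hps : ∀ i ≤ n, a i = (if i = 0 then 0 else c (i - 1)) +
      (Dps (if i < n then c i else 0) - Λ * (if i < n then c i else 0)) := by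
    intro i hi
    rcases eq_or_lt_of_le hi with h | hilt
    · rw [h]
      rw [if_neg (lt_irrefl n), if_neg (by omega : ¬ n = 0), Dps_zero, mul_zero, sub_zero, add_zero]
      apply PowerSeries.ext
      intro k
      rw [hc]
      simp only []
      rw [PowerSeries.coeff_mk, show n - 1 - (n-1) = 0 by omega]
      rfl
    · rw [if_pos hilt]
      rcases Nat.eq_zero_or_pos i with h0 | h0
      · subst h0
        rw [if_pos rfl, zero_add]
        apply PowerSeries.ext
        intro k
        rw [map_sub, hc]
        simp only []
        rw [hcoeffDps, hmulc]
        have := hstep 0 k (by omega)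
        rw [Nat.sub_zero] at this
        rw [show PowerSeries.coeff k (a 0) = A 0 k from rfl, this, hdn k]
        ring
      · rw [if_neg (by omega : ¬ i = 0)]
        apply PowerSeries.ext
        intro k
        rw [map_add, map_sub, hc]
        simp only []
        rw [hcoeffDps, hmulc, PowerSeries.coeff_mk,
          show n - 1 - (i-1) = n - i by omega,
          show PowerSeries.coeff k (a i) = A i k from rfl,
          hstep i k (by omega)]
  have hn1 : n - 1 + 1 = n := by omega
  calc opO 1 n a
      = ∑ i ∈ Finset.range (n+1), mulOp (ofPS (a i)) * ddE ^ i := by rw [opO, Xop_one]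
    _ = ∑ i ∈ Finset.range (n+1), (mulOp (ofPS (if i = 0 then 0 else c (i-1))) * ddE ^ i
          + mulOp (ofPS (Dps (if i < n then c i else 0) - Λ * (if i < n then c i else 0))) * ddE ^ i) := by
        refine Finset.sum_congr rfl (fun i hi => ?_)
        rw [Finset.mem_range] at hi
        rw [hps i (by omega), map_add, mulOp_add, add_mul]
    _ = (∑ i ∈ Finset.range (n+1), mulOp (ofPS (if i = 0 then 0 else c (i-1))) * ddE ^ i)
        + ∑ i ∈ Finset.range (n+1), mulOp (ofPS (Dps (if i < n then c i else 0)
            - Λ * (if i < n then c i else 0))) * ddE ^ i := Finset.sum_add_distrib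
    _ = (∑ i ∈ Finset.range n, mulOp (ofPS (c i)) * ddE ^ (i+1))
        + ∑ i ∈ Finset.range n, mulOp (ofPS (Dps (c i) - Λ * c i)) * ddE ^ i := by
        congr 1
        · rw [Finset.sum_range_succ' (fun i => mulOp (ofPS (if i = 0 then 0 else c (i-1))) * ddE ^ i) n]
          simp only [if_neg (Nat.succ_ne_zero _), Nat.add_sub_cancel]
          norm_num [mulOp_zero]
        · rw [Finset.sum_range_succ, if_neg (lt_irrefl n), Dps_zero, mul_zero, sub_zero,
            map_zero, mulOp_zero, zero_mul, add_zero]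
          refine Finset.sum_congr rfl (fun i hi => ?_)
          rw [Finset.mem_range] at hi
          rw [if_pos hi]
    _ = (Xop 1 - mulOp (ofPS Λ)) * opO 1 (n-1) c := by
        rw [opO, Xop_one, hn1, Finset.mul_sum, ← Finset.sum_add_distrib]
        refine Finset.sum_congr rfl (fun i hi => ?_)
        rw [sub_mul ddE (mulOp (ofPS Λ)) (mulOp (ofPS (c i)) * ddE ^ i),
          ← mul_assoc, ← mul_assoc, ddE_mulOp, ← mulOp_mul, ← map_mul,
          map_sub, mulOp_sub, ← ofPS_Dps]
        rw [add_mul, mul_assoc (mulOp (ofPS (c i))) ddE (ddE ^ i), ← pow_succ',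
          sub_mul (mulOp (ofPS (Dps (c i)))) (mulOp (ofPS (Λ * c i))) (ddE ^ i)]
        abel
end
end
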